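/- arXiv:1610.08496 — 2 statements merged into one kernel-verified Lean document; each statement's English description precedes it below -/
import Mathlib

section
/- For β > 0, q ≥ 2, and even n ≥ 4, the internal energy per particle of the Potts model on cycles satisfies U_{C_n}^q(β) < U_{C_{n+2}}^q(β). -/
open scoped Classical
open Finset

/-- Number of monochromatic edges of `G` under the coloring `σ`. -/
noncomputable def monoEdges {V : Type} [Fintype V] (G : SimpleGraph V) {q : ℕ}
    (σ : V → Fin q) : ℕ :=
  (G.edgeFinset.filter fun e =>
    Sym2.lift ⟨fun u v => σ u = σ v, fun _ _ => propext eq_comm⟩ e).card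

/-- The `q`-color Potts partition function of `G` at inverse temperature `β`. -/
noncomputable def pottsZ {V : Type} [Fintype V] (G : SimpleGraph V) (q : ℕ) (β : ℝ) : ℝ :=
  ∑ σ : V → Fin q, Real.exp (-β * monoEdges G σ)

/-- The internal energy per particle: expected number of monochromatic
edges per vertex in the Potts model. -/
noncomputable def pottsU {V : Type} [Fintype V] (G : SimpleGraph V) (q : ℕ) (β : ℝ) : ℝ :=
  (Fintype.card V : ℝ)⁻¹ *
    (∑ σ : V → Fin q, (monoEdges G σ : ℝ) * Real.exp (-β * monoEdges G σ)) / pottsZ G q β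

/-- The number of proper `q`-colorings of `G`. -/
noncomputable def properCount {V : Type} [Fintype V] (G : SimpleGraph V) (q : ℕ) : ℕ :=
  (Finset.univ.filter fun σ : V → Fin q => monoEdges G σ = 0).card

noncomputable def pottsNum {V : Type} [Fintype V] (G : SimpleGraph V) (q : ℕ) (β : ℝ) : ℝ :=
  ∑ σ : V → Fin q, (monoEdges G σ : ℝ) * Real.exp (-β * monoEdges G σ)

lemma pottsU_eq {V : Type} [Fintype V] (G : SimpleGraph V) (q : ℕ) (β : ℝ) :
    pottsU G q β = (Fintype.card V : ℝ)⁻¹ * pottsNum G q β / pottsZ G q β := rfl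

lemma sum_univ_congr {α : Type} (i1 i2 : Fintype α) (f g : α → ℝ) (h : ∀ a, f a = g a) :
    @Finset.sum α ℝ _ (@univ α i1) f = @Finset.sum α ℝ _ (@univ α i2) g := by
  cases Subsingleton.elim i1 i2
  exact Finset.sum_congr rfl fun a _ => h a

namespace PottsAux
variable {q : ℕ}

noncomputable def cp (M : Fin q → Fin q → ℝ) : (k : ℕ) → (Fin (k+1) → Fin q) → Fin q → ℝ
  | 0, c, v => M (c 0) v
  | (k+1), c, v => M (c 0) (c 1) * cp M k (fun i => c i.succ) v

noncomputable def W (M : Fin q → Fin q → ℝ) : ℕ → Fin q → Fin q → ℝ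
  | 0, u, v => M u v
  | (k+1), u, v => ∑ j, M u j * W M k j v

lemma cons_one (u : Fin q) (k : ℕ) (τ : Fin (k+1) → Fin q) :
    (Fin.cons u τ : Fin (k+2) → Fin q) 1 = τ 0 := by
  rw [← Fin.succ_zero_eq_one, Fin.cons_succ]

lemma cp_cons (M : Fin q → Fin q → ℝ) (k : ℕ) (u : Fin q) (τ : Fin (k+1) → Fin q) (v : Fin q) :
    cp M (k+1) (Fin.cons u τ) v = M u (τ 0) * cp M k τ v := by
  rw [cp]
  have h2 : (fun i : Fin (k+1) => (Fin.cons u τ : Fin (k+2) → Fin q) i.succ) = τ :=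
    funext fun i => by simp
  rw [Fin.cons_zero, cons_one, h2]

lemma sum_pi_succ {k : ℕ} (f : (Fin (k+1) → Fin q) → ℝ) :
    ∑ τ : Fin (k+1) → Fin q, f τ = ∑ j : Fin q, ∑ τ : Fin k → Fin q, f (Fin.cons j τ) := by
  calc ∑ τ : Fin (k+1) → Fin q, f τ
      = ∑ p : Fin q × (Fin k → Fin q), f (Fin.cons p.1 p.2) :=
        (Fintype.sum_equiv (Fin.consEquiv fun _ => Fin q) _ _ fun p => rfl).symm
    _ = _ := Fintype.sum_prod_type _

lemma sum_cp_cons (M : Fin q → Fin q → ℝ) : ∀ (k : ℕ) (u v : Fin q),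
    ∑ τ : Fin k → Fin q, cp M k (Fin.cons u τ) v = W M k u v := by
  intro k
  induction k with
  | zero =>
    intro u v
    rw [W]
    have h : ∀ τ : Fin 0 → Fin q, cp M 0 (Fin.cons u τ) v = M u v := by
      intro τ; rw [cp]; simp
    simp only [h]
    simp
  | succ k ih =>
    intro u v
    rw [W]
    simp only [cp_cons]
    rw [sum_pi_succ (fun τ => M u (τ 0) * cp M k τ v)]
    refine Finset.sum_congr rfl fun j _ => ?_
    simp only [Fin.cons_zero]
    rw [← Finset.mul_sum, ih]

lemma chain_aux (M : Fin q → Fin q → ℝ) : ∀ (k : ℕ) (c : Fin (k+1) → Fin q) (v : Fin q),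
    (∏ i : Fin k, M (c i.castSucc) (c i.succ)) * M (c (Fin.last k)) v = cp M k c v := by
  intro k
  induction k with
  | zero => intro c v; rw [cp]; simp
  | succ k ih =>
    intro c v
    rw [cp, Fin.prod_univ_succ, mul_assoc, ← ih (fun i => c i.succ) v]
    simp [Fin.succ_last]

lemma cyc_prod (M : Fin q → Fin q → ℝ) (k : ℕ) (σ : Fin (k+1) → Fin q) :
    ∏ i : Fin (k+1), M (σ i) (σ (i+1)) = cp M k σ (σ 0) := by
  rw [Fin.prod_univ_castSucc, ← chain_aux M k σ (σ 0)]
  simp [Fin.coeSucc_eq_succ, Fin.last_add_one]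

lemma cycSum (M : Fin q → Fin q → ℝ) (k : ℕ) :
    ∑ σ : Fin (k+1) → Fin q, ∏ i : Fin (k+1), M (σ i) (σ (i+1)) = ∑ u, W M k u u := by
  simp only [cyc_prod]
  rw [sum_pi_succ (fun σ => cp M k σ (σ 0))]
  refine Finset.sum_congr rfl fun u _ => ?_
  simp only [Fin.cons_zero]
  exact sum_cp_cons M k u u

noncomputable def T (w : ℝ) (q : ℕ) : Fin q → Fin q → ℝ := fun u v => if u = v then w else 1

lemma markedSum (w : ℝ) (k : ℕ) :
    ∑ σ : Fin (k+2) → Fin q, ((if σ 0 = σ 1 then (1:ℝ) else 0) *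
        ∏ i : Fin (k+2), T w q (σ i) (σ (i+1)))
      = w * ∑ u, W (T w q) k u u := by
  have h1 : ∀ σ : Fin (k+2) → Fin q, (if σ 0 = σ 1 then (1:ℝ) else 0) *
      ∏ i : Fin (k+2), T w q (σ i) (σ (i+1))
      = (if σ 0 = σ 1 then (1:ℝ) else 0) * cp (T w q) (k+1) σ (σ 0) := by
    intro σ; rw [cyc_prod]
  simp only [h1]
  rw [sum_pi_succ (fun σ => (if σ 0 = σ 1 then (1:ℝ) else 0) * cp (T w q) (k+1) σ (σ 0))]
  rw [Finset.mul_sum]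
  refine Finset.sum_congr rfl fun u _ => ?_
  simp only [Fin.cons_zero, cons_one, cp_cons]
  rw [sum_pi_succ (fun τ => (if u = τ 0 then (1:ℝ) else 0) * (T w q u (τ 0) * cp (T w q) k τ u))]
  have h2 : ∀ j : Fin q, ∑ τ : Fin k → Fin q,
      ((if u = (Fin.cons j τ : Fin (k+1) → Fin q) 0 then (1:ℝ) else 0) *
        (T w q u ((Fin.cons j τ : Fin (k+1) → Fin q) 0) * cp (T w q) k (Fin.cons j τ) u))
      = if u = j then w * ∑ τ : Fin k → Fin q, cp (T w q) k (Fin.cons j τ) u else 0 := by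
    intro j
    simp only [Fin.cons_zero]
    by_cases h : u = j
    · subst h
      simp only [if_pos rfl, one_mul, T, Finset.mul_sum]
      simp
    · simp [h]
  simp only [h2]
  rw [Finset.sum_ite_eq univ u]
  simp only [Finset.mem_univ, if_true]
  rw [sum_cp_cons]

lemma sum_ite_const (D O : ℝ) (v : Fin q) :
    ∑ x : Fin q, (if x = v then D else O) = q * O + (D - O) := by
  have h : ∀ x : Fin q, (if x = v then D else O) = O + (if x = v then D - O else 0) := by
    intro x; by_cases h : x = v <;> simp [h]
  simp only [h]
  rw [Finset.sum_add_distrib, Finset.sum_const, Finset.sum_ite_eq' univ v]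
  simp [mul_comm]

lemma W_eval (w : ℝ) (hq : 0 < q) : ∀ (k : ℕ) (u v : Fin q),
    W (T w q) k u v = if u = v
      then ((w+q-1)^(k+1) + (q-1)*(w-1)^(k+1))/q
      else ((w+q-1)^(k+1) - (w-1)^(k+1))/q := by
  have hq0 : (q:ℝ) ≠ 0 := Nat.cast_ne_zero.mpr hq.ne'
  intro k
  induction k with
  | zero =>
    intro u v
    rw [W, T]
    by_cases h : u = v <;> simp [h] <;> field_simp <;> ring
  | succ k ih =>
    intro u v
    rw [W]
    simp only [ih]
    set D := ((w+q-1)^(k+1) + (q-1)*(w-1)^(k+1))/q with hD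
    set O := ((w+q-1)^(k+1) - (w-1)^(k+1))/q with hO
    have expand : ∀ j : Fin q, T w q u j * (if j = v then D else O)
        = (if j = v then D else O)
          + (if j = u then (w-1) * (if u = v then D else O) else 0) := by
      intro j
      rw [T]
      by_cases h1 : u = j
      · subst h1
        by_cases h2 : u = v <;> simp [h2] <;> ring
      · by_cases h2 : j = v
        · subst h2
          simp [h1, Ne.symm h1]
        · simp [h1, h2, Ne.symm h1]
    simp only [expand]
    rw [Finset.sum_add_distrib, sum_ite_const, Finset.sum_ite_eq' univ u]
    simp only [Finset.mem_univ, if_true]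
    by_cases h : u = v <;> simp only [h, if_true, if_false] <;> rw [hD, hO] <;>
      field_simp <;> ring

lemma sum_W_diag (w : ℝ) (hq : 0 < q) (k : ℕ) :
    ∑ u : Fin q, W (T w q) k u u = (w+q-1)^(k+1) + ((q:ℝ)-1)*(w-1)^(k+1) := by
  have hq0 : (q:ℝ) ≠ 0 := Nat.cast_ne_zero.mpr hq.ne'
  simp only [W_eval w hq, if_pos rfl, if_true]
  rw [Finset.sum_const, Finset.card_univ, Fintype.card_fin, nsmul_eq_mul]
  field_simp

lemma monoEdges_cycle (m : ℕ) (σ : Fin (m+3) → Fin q) :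
    monoEdges (SimpleGraph.cycleGraph (m+3)) σ
      = (univ.filter fun i : Fin (m+3) => σ i = σ (i+1)).card := by
  rw [monoEdges]
  symm
  apply Finset.card_bij (fun i _ => s(i, i+1))
  · intro i hi
    simp only [Finset.mem_filter, Finset.mem_univ, true_and] at hi
    simp only [Finset.mem_filter, SimpleGraph.mem_edgeFinset, SimpleGraph.mem_edgeSet]
    constructor
    · rw [SimpleGraph.cycleGraph_adj]
      right
      simp
    · simpa using hi
  · intro i hi j hj h
    rw [Sym2.eq_iff] at h
    rcases h with ⟨h1, _⟩ | ⟨h1, h2⟩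
    · exact h1
    · exfalso
      have key : i = i + (1 + 1) := by
        calc i = j + 1 := h1
          _ = (i + 1) + 1 := by rw [h2]
          _ = i + (1 + 1) := by rw [add_assoc]
      have h0 : (1 + 1 : Fin (m+3)) = 0 := left_eq_add.mp key
      have h3 := congrArg Fin.val h0
      simp [Fin.val_add_eq_ite] at h3
  · intro e he
    simp only [Finset.mem_filter, SimpleGraph.mem_edgeFinset, SimpleGraph.mem_edgeSet] at he
    induction e using Sym2.ind with
    | _ u v =>
      obtain ⟨hadj, hP⟩ := he
      rw [SimpleGraph.mem_edgeSet, SimpleGraph.cycleGraph_adj] at hadj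
      simp only [Sym2.lift_mk] at hP
      rcases hadj with h | h
      · refine ⟨v, ?_, ?_⟩
        · simp only [Finset.mem_filter, Finset.mem_univ, true_and]
          have hu : u = v + 1 := by rw [← h]; abel
          rw [← hu]; exact hP.symm
        · have hu : u = v + 1 := by rw [← h]; abel
          rw [hu, Sym2.eq_swap]
      · refine ⟨u, ?_, ?_⟩
        · simp only [Finset.mem_filter, Finset.mem_univ, true_and]
          have hv : v = u + 1 := by rw [← h]; abel
          rw [← hv]; exact hP
        · have hv : v = u + 1 := by rw [← h]; abel
          rw [hv]

lemma exp_mono_prod (β : ℝ) (m : ℕ) (σ : Fin (m+3) → Fin q) :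
    Real.exp (-β * monoEdges (SimpleGraph.cycleGraph (m+3)) σ)
      = ∏ i : Fin (m+3), T (Real.exp (-β)) q (σ i) (σ (i+1)) := by
  rw [monoEdges_cycle, show -β * ((univ.filter fun i : Fin (m+3) => σ i = σ (i+1)).card : ℝ)
      = (((univ.filter fun i : Fin (m+3) => σ i = σ (i+1)).card : ℕ) : ℝ) * (-β) by
        push_cast; ring,
    Real.exp_nat_mul]
  symm
  calc ∏ i : Fin (m+3), T (Real.exp (-β)) q (σ i) (σ (i+1))
      = ∏ i : Fin (m+3), (if σ i = σ (i+1) then Real.exp (-β) else 1) := rfl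
    _ = _ := by
        rw [Finset.prod_ite (f := fun _ => Real.exp (-β)) (g := fun _ => (1:ℝ)),
          Finset.prod_const, Finset.prod_const_one, mul_one]

lemma mono_cast_sum (m : ℕ) (σ : Fin (m+3) → Fin q) :
    ((monoEdges (SimpleGraph.cycleGraph (m+3)) σ : ℕ) : ℝ)
      = ∑ i : Fin (m+3), (if σ i = σ (i+1) then (1:ℝ) else 0) := by
  rw [monoEdges_cycle, Finset.card_filter]
  push_cast
  simp

lemma pottsZ_cycle (hq : 0 < q) (m : ℕ) (β : ℝ) :
    pottsZ (SimpleGraph.cycleGraph (m+3)) q β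
      = (Real.exp (-β)+q-1)^(m+3) + ((q:ℝ)-1)*(Real.exp (-β)-1)^(m+3) := by
  calc pottsZ (SimpleGraph.cycleGraph (m+3)) q β
      = ∑ σ : Fin (m+2+1) → Fin q, ∏ i : Fin (m+2+1),
          T (Real.exp (-β)) q (σ i) (σ (i+1)) := by
        rw [pottsZ]; exact sum_univ_congr _ _ _ _ fun σ => exp_mono_prod β m σ
    _ = ∑ u : Fin q, W (T (Real.exp (-β)) q) (m+2) u u := cycSum _ _
    _ = _ := sum_W_diag _ hq _

lemma rotate (w : ℝ) (m : ℕ) (i : Fin (m+3)) :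
    ∑ σ : Fin (m+3) → Fin q, ((if σ i = σ (i+1) then (1:ℝ) else 0) *
        ∏ j : Fin (m+3), T w q (σ j) (σ (j+1)))
    = ∑ σ : Fin (m+3) → Fin q, ((if σ 0 = σ 1 then (1:ℝ) else 0) *
        ∏ j : Fin (m+3), T w q (σ j) (σ (j+1))) := by
  apply Fintype.sum_equiv (Equiv.arrowCongr (Equiv.addRight i).symm (Equiv.refl (Fin q)))
  intro σ
  have hΦ : ∀ j, (Equiv.arrowCongr (Equiv.addRight i).symm (Equiv.refl (Fin q)) σ) j
      = σ (j + i) := fun j => rfl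
  simp only [hΦ]
  congr 1
  · rw [zero_add, add_comm (1 : Fin (m+3)) i]
  · refine Fintype.prod_equiv (Equiv.subRight i) _ _ fun x => ?_
    have h1 : x - i + i = x := by abel
    have h2 : x - i + 1 + i = x + 1 := by abel
    show T w q (σ x) (σ (x+1)) = T w q (σ (x - i + i)) (σ (x - i + 1 + i))
    rw [h1, h2]

lemma pottsNum_cycle (hq : 0 < q) (m : ℕ) (β : ℝ) :
    pottsNum (SimpleGraph.cycleGraph (m+3)) q β
      = (m+3) * Real.exp (-β) *
        ((Real.exp (-β)+q-1)^(m+2) + ((q:ℝ)-1)*(Real.exp (-β)-1)^(m+2)) := by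
  set w := Real.exp (-β) with hw
  calc pottsNum (SimpleGraph.cycleGraph (m+3)) q β
      = ∑ σ : Fin (m+3) → Fin q, ∑ i : Fin (m+3), ((if σ i = σ (i+1) then (1:ℝ) else 0) *
          ∏ j : Fin (m+3), T w q (σ j) (σ (j+1))) := by
        rw [pottsNum]
        refine sum_univ_congr _ _ _ _ fun σ => ?_
        rw [exp_mono_prod, mono_cast_sum, Finset.sum_mul]
    _ = ∑ i : Fin (m+3), ∑ σ : Fin (m+3) → Fin q, ((if σ i = σ (i+1) then (1:ℝ) else 0) *
          ∏ j : Fin (m+3), T w q (σ j) (σ (j+1))) := Finset.sum_comm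
    _ = ∑ _i : Fin (m+3), ∑ σ : Fin (m+3) → Fin q, ((if σ 0 = σ 1 then (1:ℝ) else 0) *
          ∏ j : Fin (m+3), T w q (σ j) (σ (j+1))) :=
        Finset.sum_congr rfl fun i _ => rotate w m i
    _ = (m+3) * (w * ∑ u : Fin q, W (T w q) (m+1) u u) := by
        rw [Finset.sum_const, Finset.card_univ, Fintype.card_fin, nsmul_eq_mul,
          markedSum w (m+1)]
        push_cast; ring
    _ = (m+3) * w * ((w+q-1)^(m+2) + ((q:ℝ)-1)*(w-1)^(m+2)) := by
        rw [sum_W_diag _ hq]; ring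

lemma A_pos (hq : 2 ≤ q) {w : ℝ} (hw0 : 0 < w) (hw1 : w < 1) (j : ℕ) :
    0 < (w+(q:ℝ)-1)^(j+1) + ((q:ℝ)-1)*(w-1)^(j+1) := by
  have hq2 : (2:ℝ) ≤ (q:ℝ) := by exact_mod_cast hq
  have h1 : (1-w)^j ≤ (w+(q:ℝ)-1)^j := pow_le_pow_left₀ (by linarith) (by linarith) j
  have h3 : -(((1:ℝ) - w)^(j+1)) ≤ (w-1)^(j+1) := by
    have habs : |(w-1)^(j+1)| = (1-w)^(j+1) := by
      rw [abs_pow, abs_of_neg (by linarith : w - 1 < 0), show -(w-1) = 1-w from by ring]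
    calc -((1-w)^(j+1)) = -|(w-1)^(j+1)| := by rw [habs]
      _ ≤ (w-1)^(j+1) := neg_abs_le _
  have h4 : ((q:ℝ)-1) * (1-w)^(j+1) < (w+(q:ℝ)-1)^(j+1) := by
    calc ((q:ℝ)-1) * (1-w)^(j+1) = (((q:ℝ)-1)*(1-w)) * (1-w)^j := by ring
      _ < (w+(q:ℝ)-1) * (w+(q:ℝ)-1)^j := by
          apply mul_lt_mul (by nlinarith) h1 (pow_pos (by linarith) j) (by linarith)
      _ = (w+(q:ℝ)-1)^(j+1) := (pow_succ' _ _).symm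
  nlinarith [mul_le_mul_of_nonneg_left h3 (by linarith : (0:ℝ) ≤ (q:ℝ)-1)]

lemma pottsU_cycle (hq : 2 ≤ q) (m : ℕ) {β : ℝ} (hβ : 0 < β) :
    pottsU (SimpleGraph.cycleGraph (m+3)) q β
      = Real.exp (-β) *
          ((Real.exp (-β)+q-1)^(m+2) + ((q:ℝ)-1)*(Real.exp (-β)-1)^(m+2)) /
        ((Real.exp (-β)+q-1)^(m+3) + ((q:ℝ)-1)*(Real.exp (-β)-1)^(m+3)) := by
  have hq0 : 0 < q := by omega
  have hw0 : 0 < Real.exp (-β) := Real.exp_pos _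
  have hw1 : Real.exp (-β) < 1 := by
    rw [show (1:ℝ) = Real.exp 0 by simp]
    exact Real.exp_lt_exp.mpr (by linarith)
  have hZ : 0 < (Real.exp (-β)+(q:ℝ)-1)^(m+3) + ((q:ℝ)-1)*(Real.exp (-β)-1)^(m+3) :=
    A_pos hq hw0 hw1 (m+2)
  rw [pottsU_eq, pottsNum_cycle hq0 m β, pottsZ_cycle hq0 m β, Fintype.card_fin]
  have hm : ((m:ℝ)+3) ≠ 0 := by positivity
  field_simp
  push_cast
  ring

end PottsAux

set_option maxHeartbeats 2000000 in
theorem potts_energy_cycle_even_increasing (n : ℕ) (hn : 4 ≤ n) (heven : Even n)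
    (q : ℕ) (hq : 2 ≤ q) (β : ℝ) (hβ : 0 < β) :
    pottsU (SimpleGraph.cycleGraph n) q β < pottsU (SimpleGraph.cycleGraph (n + 2)) q β := by
  obtain ⟨k, rfl⟩ : ∃ k, n = k + 4 := ⟨n - 4, by omega⟩
  have hk : Even k := by
    rcases heven with ⟨t, ht⟩
    exact ⟨t - 2, by omega⟩
  have hq2 : (2:ℝ) ≤ (q:ℝ) := by exact_mod_cast hq
  have e1 := PottsAux.pottsU_cycle (q := q) hq (k+1) hβ
  have e2 := PottsAux.pottsU_cycle (q := q) hq (k+3) hβ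
  rw [show k+1+3 = k+4 from by omega, show k+1+2 = k+3 from by omega] at e1
  rw [show k+3+3 = k+4+2 from by omega, show k+3+2 = k+5 from by omega,
    show k+3+3 = k+6 from by omega] at e2
  set w := Real.exp (-β) with hw
  have hw0 : 0 < w := Real.exp_pos _
  have hw1 : w < 1 := by
    rw [hw, show (1:ℝ) = Real.exp 0 by simp]
    exact Real.exp_lt_exp.mpr (by linarith)
  rw [e1, e2]
  set a := w + (q:ℝ) - 1 with ha_def
  set b := w - 1 with hb_def
  have ha : 1 < a := by rw [ha_def]; linarith
  have hb : b < 0 := by rw [hb_def]; linarith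
  have hab : 0 < a + b := by rw [ha_def, hb_def]; linarith
  have hamb : 0 < a - b := by linarith
  have hp : 0 < a^(k+3) := pow_pos (by linarith) _
  have hr : b^(k+3) < 0 := by
    refine Odd.pow_neg ?_ hb
    rcases hk with ⟨t, ht⟩
    exact ⟨t + 1, by omega⟩
  have hA4 : 0 < a^(k+4) + ((q:ℝ)-1)*b^(k+4) := PottsAux.A_pos hq hw0 hw1 (k+3)
  have hA6 : 0 < a^(k+6) + ((q:ℝ)-1)*b^(k+6) := PottsAux.A_pos hq hw0 hw1 (k+5)
  rw [div_lt_div_iff₀ hA4 hA6]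
  have ea4 : a^(k+4) = a^(k+3)*a := pow_succ a (k+3)
  have ea5 : a^(k+5) = a^(k+3)*a*a := by rw [pow_succ, pow_succ]
  have ea6 : a^(k+6) = a^(k+3)*a*a*a := by rw [pow_succ, pow_succ, pow_succ]
  have eb4 : b^(k+4) = b^(k+3)*b := pow_succ b (k+3)
  have eb5 : b^(k+5) = b^(k+3)*b*b := by rw [pow_succ, pow_succ]
  have eb6 : b^(k+6) = b^(k+3)*b*b*b := by rw [pow_succ, pow_succ, pow_succ]
  rw [ea4, ea5, ea6, eb4, eb5, eb6]
  have key : (a^(k+3)*a + ((q:ℝ)-1)*(b^(k+3)*b)) * (a^(k+3)*a*a + ((q:ℝ)-1)*(b^(k+3)*b*b))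
      - (a^(k+3) + ((q:ℝ)-1)*b^(k+3)) * (a^(k+3)*a*a*a + ((q:ℝ)-1)*(b^(k+3)*b*b*b))
      = ((q:ℝ)-1) * a^(k+3) * (-(b^(k+3))) * (a+b) * (a-b)^2 := by ring
  have hpos : 0 < ((q:ℝ)-1) * a^(k+3) * (-(b^(k+3))) * (a+b) * (a-b)^2 := by
    apply mul_pos
    apply mul_pos
    apply mul_pos
    apply mul_pos (by linarith : (0:ℝ) < (q:ℝ)-1) hp
    · linarith
    · exact hab
    · exact pow_pos hamb 2
  have h6 : (a^(k+3) + ((q:ℝ)-1)*b^(k+3)) * (a^(k+3)*a*a*a + ((q:ℝ)-1)*(b^(k+3)*b*b*b))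
      < (a^(k+3)*a + ((q:ℝ)-1)*(b^(k+3)*b)) * (a^(k+3)*a*a + ((q:ℝ)-1)*(b^(k+3)*b*b)) := by
    nlinarith [key, hpos]
  nlinarith [mul_lt_mul_of_pos_left h6 hw0]
end

section
/- For β > 0, q ≥ 2, and odd n ≥ 3, U_{C_n}^q(β) > e^{−β}/(e^{−β}+q−1), and for even n ≥ 4, U_{C_n}^q(β) < e^{−β}/(e^{−β}+q−1). Moreover lim_{n→∞} U_{C_n}^q(β) = e^{−β}/(e^{−β}+q−1). -/
open scoped Classical
open Finset

lemma cycle_edgeFinset (m : ℕ) [inst : Fintype (SimpleGraph.cycleGraph (m+3)).edgeSet] :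
    @SimpleGraph.edgeFinset _ (SimpleGraph.cycleGraph (m+3)) inst
      = Finset.univ.image (fun i : Fin (m+3) => s(i, i+1)) := by
  ext e
  refine Sym2.ind (fun u v => ?_) e
  simp only [SimpleGraph.mem_edgeFinset, SimpleGraph.mem_edgeSet, Finset.mem_image,
    Finset.mem_univ, true_and]
  rw [SimpleGraph.cycleGraph_adj]
  constructor
  · rintro (h | h)
    · refine ⟨v, ?_⟩
      rw [sub_eq_iff_eq_add] at h
      subst h
      rw [add_comm 1 v]
      exact Sym2.eq_swap
    · refine ⟨u, ?_⟩
      rw [sub_eq_iff_eq_add] at h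
      subst h
      rw [add_comm 1 u]
  · rintro ⟨i, hi⟩
    rw [Sym2.eq_iff] at hi
    rcases hi with ⟨rfl, rfl⟩ | ⟨rfl, rfl⟩
    · right; simp
    · left; simp

lemma cycle_edge_inj (m : ℕ) :
    Function.Injective (fun i : Fin (m+3) => s(i, i+1)) := by
  intro i j h
  simp only [Sym2.eq_iff] at h
  rcases h with ⟨h, _⟩ | ⟨h1, h2⟩
  · exact h
  · exfalso
    have h3 : i + (1 + 1) = i + 0 := by
      rw [add_zero, ← add_assoc, h2, ← h1]
    have h4 := add_left_cancel h3
    have h5 := congrArg Fin.val h4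
    simp [Fin.val_add, Fin.val_one] at h5
    rw [Nat.mod_eq_of_lt (by omega)] at h5
    simp at h5

lemma monoEdges_cycle (m q : ℕ) (σ : Fin (m+3) → Fin q) :
    monoEdges (SimpleGraph.cycleGraph (m+3)) σ
      = (Finset.univ.filter fun i : Fin (m+3) => σ i = σ (i+1)).card := by
  unfold monoEdges
  rw [cycle_edgeFinset, Finset.filter_image,
    Finset.card_image_of_injective _ (cycle_edge_inj m)]
  congr 1
  ext i
  simp only [Finset.mem_filter]
  simp


noncomputable def Tm (q : ℕ) (w : ℝ) : Matrix (Fin q) (Fin q) ℝ :=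
  Matrix.of fun a b => if a = b then w else 1

lemma Tm_pow (q : ℕ) (hq : (q:ℝ) ≠ 0) (w : ℝ) (n : ℕ) :
    (Tm q w) ^ n = Matrix.of fun a b =>
      (if a = b then (w-1)^n else 0) + ((w+q-1)^n - (w-1)^n)/q := by
  induction n with
  | zero =>
    ext a b
    by_cases h : a = b <;> simp [h, Matrix.one_apply]
  | succ n ih =>
    ext a b
    rw [pow_succ, ih, Matrix.mul_apply]
    simp only [Matrix.of_apply, Tm]
    have hsum1 : ∀ c : Fin q, ((if a = c then (w-1)^n else 0) + ((w+q-1)^n - (w-1)^n)/q)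
        * (if c = b then w else 1)
        = (if a = c then (w-1)^n * (if c = b then w else 1) else 0)
          + (((w+q-1)^n - (w-1)^n)/q * (if c = b then (w-1) else 0)
             + ((w+q-1)^n - (w-1)^n)/q) := by
      intro c
      by_cases h2 : c = b
      · subst h2
        by_cases h1 : a = c <;> simp [h1] <;> ring
      · by_cases h1 : a = c <;> simp [h1, h2] <;> ring
    rw [Finset.sum_congr rfl fun c _ => hsum1 c]
    rw [Finset.sum_add_distrib, Finset.sum_add_distrib, Finset.sum_ite_eq,
      Finset.sum_const, ← Finset.mul_sum, Finset.sum_ite_eq', Finset.card_univ,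
      Fintype.card_fin]
    simp only [Finset.mem_univ, if_true]
    by_cases h : a = b <;> simp [h] <;> field_simp <;> ring

noncomputable def pathW (q : ℕ) (w : ℝ) : (n : ℕ) → Fin q → Fin q → (Fin n → Fin q) → ℝ
  | 0, a, b, _ => Tm q w a b
  | (n+1), a, b, σ => Tm q w a (σ 0) * pathW q w n (σ 0) b (Fin.tail σ)

lemma sum_pathW (q : ℕ) (w : ℝ) (n : ℕ) (a b : Fin q) :
    ∑ σ : Fin n → Fin q, pathW q w n a b σ = ((Tm q w) ^ (n+1)) a b := by
  induction n generalizing a with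
  | zero =>
    rw [pow_one]
    simp [pathW, Finset.sum_const, Finset.card_univ]
  | succ n ih =>
    rw [← Fintype.sum_equiv (Fin.consEquiv fun _ => Fin q)
      (fun p : Fin q × (Fin n → Fin q) => Tm q w a p.1 * pathW q w n p.1 b p.2)
      (fun σ => pathW q w (n+1) a b σ)
      (fun p => by simp [pathW, Fin.consEquiv, Fin.tail_cons])]
    rw [Fintype.sum_prod_type]
    have : ∀ c : Fin q, ∑ τ : Fin n → Fin q, Tm q w a c * pathW q w n c b τ
        = Tm q w a c * ((Tm q w)^(n+1)) c b := by
      intro c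
      rw [← Finset.mul_sum, ih c]
    rw [Finset.sum_congr rfl fun c _ => this c]
    rw [pow_succ' (Tm q w) (n+1), Matrix.mul_apply]

lemma pathW_eq (q : ℕ) (w : ℝ) : ∀ (n : ℕ) (σ : Fin (n+1) → Fin q) (b : Fin q),
    (∏ i : Fin n, Tm q w (σ i.castSucc) (σ i.succ)) * Tm q w (σ (Fin.last n)) b
      = pathW q w n (σ 0) b (Fin.tail σ) := by
  intro n
  induction n with
  | zero => intro σ b; simp [pathW]
  | succ n ih =>
    intro σ b
    rw [Fin.prod_univ_succ]
    have h1 : ∀ i : Fin n, Tm q w (σ i.succ.castSucc) (σ i.succ.succ)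
        = Tm q w ((Fin.tail σ) i.castSucc) ((Fin.tail σ) i.succ) := by
      intro i
      rw [Fin.tail, Fin.tail, ← Fin.succ_castSucc]
    rw [Finset.prod_congr rfl fun i _ => h1 i]
    have h2 : σ (Fin.last (n+1)) = (Fin.tail σ) (Fin.last n) := by
      rw [Fin.tail, Fin.succ_last]
    rw [h2, mul_assoc, ih (Fin.tail σ) b]
    simp [pathW, Fin.tail]

lemma cycle_prod (q : ℕ) (w : ℝ) (n : ℕ) (σ : Fin (n+1) → Fin q) :
    ∏ i : Fin (n+1), Tm q w (σ i) (σ (i+1)) = pathW q w n (σ 0) (σ 0) (Fin.tail σ) := by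
  rw [Fin.prod_univ_castSucc]
  have h1 : ∀ i : Fin n, Tm q w (σ i.castSucc) (σ (i.castSucc + 1))
      = Tm q w (σ i.castSucc) (σ i.succ) := by
    intro i; rw [Fin.coeSucc_eq_succ]
  rw [Finset.prod_congr rfl fun i _ => h1 i, Fin.last_add_one]
  exact pathW_eq q w n σ (σ 0)

lemma Z_trace (q : ℕ) (w : ℝ) (n : ℕ) :
    ∑ σ : Fin (n+1) → Fin q, ∏ i : Fin (n+1), Tm q w (σ i) (σ (i+1))
      = ∑ a : Fin q, ((Tm q w) ^ (n+1)) a a := by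
  rw [Finset.sum_congr rfl fun σ _ => cycle_prod q w n σ]
  rw [← Fintype.sum_equiv (Fin.consEquiv fun _ => Fin q)
    (fun p : Fin q × (Fin n → Fin q) => pathW q w n p.1 p.1 p.2)
    (fun σ : Fin (n+1) → Fin q => pathW q w n (σ 0) (σ 0) (Fin.tail σ))
    (fun p => by simp [Fin.consEquiv, Fin.tail_cons])]
  rw [Fintype.sum_prod_type]
  exact Finset.sum_congr rfl fun a _ => sum_pathW q w n a a

lemma trace_formula (q : ℕ) (hq : (q:ℝ) ≠ 0) (w : ℝ) (m : ℕ) :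
    ∑ a : Fin q, ((Tm q w) ^ m) a a = (w+q-1)^m + ((q:ℝ)-1)*(w-1)^m := by
  rw [Tm_pow q hq w m]
  simp only [Matrix.of_apply, if_pos rfl]
  simp only [if_true]
  rw [Finset.sum_const, Finset.card_univ, Fintype.card_fin]
  simp only [nsmul_eq_mul]
  field_simp
  ring

lemma sum_inst_eq {α : Type} {M : Type} [AddCommMonoid M] (i1 i2 : Fintype α) (f : α → M) :
    @Finset.sum α M _ (@Finset.univ α i1) f = @Finset.sum α M _ (@Finset.univ α i2) f := by
  have h : i1 = i2 := Subsingleton.elim _ _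
  subst h
  rfl

lemma Zsum_formula (q : ℕ) (hq : (q:ℝ) ≠ 0) (m : ℕ) (β : ℝ)
    (inst : Fintype (Fin (m+3) → Fin q)) :
    ∑ σ ∈ @Finset.univ _ inst,
        Real.exp (-β * (monoEdges (SimpleGraph.cycleGraph (m+3)) σ : ℕ))
      = (Real.exp (-β) + q - 1)^(m+3) + ((q:ℝ)-1)*(Real.exp (-β) - 1)^(m+3) := by
  obtain rfl : inst = Pi.instFintype := Subsingleton.elim _ _
  have key : ∀ σ : Fin (m+3) → Fin q,
      Real.exp (-β * (monoEdges (SimpleGraph.cycleGraph (m+3)) σ : ℕ))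
        = ∏ i : Fin (m+3), Tm q (Real.exp (-β)) (σ i) (σ (i+1)) := by
    intro σ
    rw [monoEdges_cycle, mul_comm, Real.exp_nat_mul]
    show _ = ∏ i : Fin (m+3), if σ i = σ (i+1) then Real.exp (-β) else 1
    rw [Finset.prod_ite, Finset.prod_const, Finset.prod_const_one, mul_one]
  rw [Finset.sum_congr rfl fun σ _ => key σ]
  exact (Z_trace q (Real.exp (-β)) (m+2)).trans (trace_formula q hq (Real.exp (-β)) (m+3))

lemma Z_formula (q : ℕ) (hq : (q:ℝ) ≠ 0) (m : ℕ) (β : ℝ) :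
    pottsZ (SimpleGraph.cycleGraph (m+3)) q β
      = (Real.exp (-β) + q - 1)^(m+3) + ((q:ℝ)-1)*(Real.exp (-β) - 1)^(m+3) := by
  unfold pottsZ
  exact Zsum_formula q hq m β _

lemma S_formula (q : ℕ) (hq : (q:ℝ) ≠ 0) (m : ℕ) (β : ℝ)
    (inst : Fintype (Fin (m+3) → Fin q)) :
    ∑ σ ∈ @Finset.univ _ inst,
        (monoEdges (SimpleGraph.cycleGraph (m+3)) σ : ℝ)
          * Real.exp (-β * (monoEdges (SimpleGraph.cycleGraph (m+3)) σ : ℕ))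
      = ((m+3:ℕ):ℝ) * Real.exp (-β) *
        ((Real.exp (-β) + q - 1)^(m+2) + ((q:ℝ)-1)*(Real.exp (-β) - 1)^(m+2)) := by
  obtain rfl : inst = Pi.instFintype := Subsingleton.elim _ _
  set G := SimpleGraph.cycleGraph (m+3)
  have h1 : HasDerivAt (fun x : ℝ => ∑ σ : Fin (m+3) → Fin q,
      Real.exp (-x * (monoEdges G σ : ℕ)))
      (∑ σ : Fin (m+3) → Fin q,
        Real.exp (-β * (monoEdges G σ : ℕ)) * (-(monoEdges G σ : ℝ))) β := by
    apply HasDerivAt.fun_sum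
    intro σ _
    have hb : HasDerivAt (fun x : ℝ => -x * ((monoEdges G σ : ℕ) : ℝ))
        (-((monoEdges G σ : ℕ) : ℝ)) β := by
      simpa using ((hasDerivAt_id β).neg.mul_const ((monoEdges G σ : ℕ) : ℝ))
    exact hb.exp
  have hE : HasDerivAt (fun x : ℝ => Real.exp (-x)) (Real.exp (-β) * -1) β :=
    (hasDerivAt_neg β).exp
  have hA : HasDerivAt (fun x : ℝ => Real.exp (-x) + (q:ℝ) - 1) (Real.exp (-β) * -1) β :=
    (hE.add_const (q:ℝ)).sub_const 1
  have hB : HasDerivAt (fun x : ℝ => Real.exp (-x) - 1) (Real.exp (-β) * -1) β :=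
    hE.sub_const 1
  have h2 : HasDerivAt (fun x : ℝ => (Real.exp (-x) + (q:ℝ) - 1)^(m+3)
      + ((q:ℝ)-1)*(Real.exp (-x) - 1)^(m+3))
      (((m+3:ℕ):ℝ) * (Real.exp (-β) + (q:ℝ) - 1)^(m+2) * (Real.exp (-β) * -1)
        + ((q:ℝ)-1) * (((m+3:ℕ):ℝ) * (Real.exp (-β) - 1)^(m+2) * (Real.exp (-β) * -1))) β :=
    (hA.pow (m+3)).add ((hB.pow (m+3)).const_mul ((q:ℝ)-1))
  have hfun : (fun x : ℝ => ∑ σ : Fin (m+3) → Fin q, Real.exp (-x * (monoEdges G σ : ℕ)))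
      = (fun x : ℝ => (Real.exp (-x) + (q:ℝ) - 1)^(m+3)
        + ((q:ℝ)-1)*(Real.exp (-x) - 1)^(m+3)) :=
    funext fun x => Zsum_formula q hq m x _
  rw [hfun] at h1
  have heq := h1.unique h2
  have hS : ∑ σ : Fin (m+3) → Fin q,
      Real.exp (-β * (monoEdges G σ : ℕ)) * (-(monoEdges G σ : ℝ))
      = -∑ σ : Fin (m+3) → Fin q,
        (monoEdges G σ : ℝ) * Real.exp (-β * (monoEdges G σ : ℕ)) := by
    rw [← Finset.sum_neg_distrib]
    exact Finset.sum_congr rfl fun σ _ => by ring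
  rw [hS] at heq
  have h3 : ∑ σ : Fin (m+3) → Fin q,
      (monoEdges G σ : ℝ) * Real.exp (-β * (monoEdges G σ : ℕ))
      = -(((m+3:ℕ):ℝ) * (Real.exp (-β) + (q:ℝ) - 1)^(m+2) * (Real.exp (-β) * -1)
        + ((q:ℝ)-1) * (((m+3:ℕ):ℝ) * (Real.exp (-β) - 1)^(m+2) * (Real.exp (-β) * -1))) := by
    linarith
  rw [h3]
  ring

set_option maxHeartbeats 1000000 in
lemma U_formula (q : ℕ) (hq : (q:ℝ) ≠ 0) (m : ℕ) (β : ℝ) :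
    pottsU (SimpleGraph.cycleGraph (m+3)) q β
      = Real.exp (-β) * ((Real.exp (-β)+(q:ℝ)-1)^(m+2) + ((q:ℝ)-1)*(Real.exp (-β)-1)^(m+2))
        / ((Real.exp (-β)+(q:ℝ)-1)^(m+3) + ((q:ℝ)-1)*(Real.exp (-β)-1)^(m+3)) := by
  unfold pottsU
  rw [Fintype.card_fin, S_formula q hq m β _, Z_formula q hq m β]
  have hm : ((m+3:ℕ):ℝ) ≠ 0 := by
    push_cast
    positivity
  congr 1
  field_simp

theorem potts_energy_cycle_vs_line (q : ℕ) (hq : 2 ≤ q) (β : ℝ) (hβ : 0 < β) :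
    (∀ n : ℕ, 3 ≤ n → Odd n →
      Real.exp (-β) / (Real.exp (-β) + (q : ℝ) - 1) < pottsU (SimpleGraph.cycleGraph n) q β) ∧
    (∀ n : ℕ, 4 ≤ n → Even n →
      pottsU (SimpleGraph.cycleGraph n) q β < Real.exp (-β) / (Real.exp (-β) + (q : ℝ) - 1)) ∧
    Filter.Tendsto (fun n : ℕ => pottsU (SimpleGraph.cycleGraph n) q β) Filter.atTop
      (nhds (Real.exp (-β) / (Real.exp (-β) + (q : ℝ) - 1))) := by
  have hq0 : (q:ℝ) ≠ 0 := Nat.cast_ne_zero.mpr (by omega)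
  have hq2 : (2:ℝ) ≤ (q:ℝ) := by exact_mod_cast hq
  set w := Real.exp (-β) with hwdef
  have hw0 : 0 < w := Real.exp_pos _
  have hw1 : w < 1 := by
    rw [hwdef, ← Real.exp_zero]
    exact Real.exp_lt_exp.mpr (by linarith)
  set A := w + (q:ℝ) - 1 with hAdef
  set B := w - 1 with hBdef
  have hA1 : 1 < A := by rw [hAdef]; linarith
  have hA0 : 0 < A := by linarith
  have hAB : B < A := by rw [hAdef, hBdef]; linarith
  have hABq : A - B = (q:ℝ) := by rw [hAdef, hBdef]; ring
  have hB0 : B < 0 := by rw [hBdef]; linarith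
  have hBne : B ≠ 0 := ne_of_lt hB0
  have hBgt : -1 < B := by rw [hBdef]; linarith
  have habsB : |B| < 1 := abs_lt.mpr ⟨hBgt, by linarith⟩
  have hZpos : ∀ k : ℕ, 0 < A^(k+1) + ((q:ℝ)-1) * B^(k+1) := by
    intro k
    have h1 : |((q:ℝ)-1) * B^(k+1)| < A^(k+1) := by
      rw [abs_mul, abs_pow]
      calc |(q:ℝ)-1| * |B|^(k+1) = ((q:ℝ)-1) * |B|^(k+1) := by
            rw [abs_of_nonneg (by linarith)]
        _ < ((q:ℝ)-1) * 1 := by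
            exact mul_lt_mul_of_pos_left
              (pow_lt_one₀ (abs_nonneg B) habsB (Nat.succ_ne_zero k)) (by linarith)
        _ ≤ A := by rw [hAdef]; linarith
        _ ≤ A^(k+1) := le_self_pow₀ (by linarith) (Nat.succ_ne_zero k)
    have h2 := neg_lt_of_abs_lt h1
    linarith
  have hU : ∀ m : ℕ, pottsU (SimpleGraph.cycleGraph (m+3)) q β
      = w * (A^(m+2) + ((q:ℝ)-1)*B^(m+2)) / (A^(m+3) + ((q:ℝ)-1)*B^(m+3)) :=
    fun m => U_formula q hq0 m β
  refine ⟨?_, ?_, ?_⟩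
  · intro n hn hodd
    obtain ⟨m, rfl⟩ : ∃ m, n = m + 3 := ⟨n - 3, by omega⟩
    rw [hU m, div_lt_div_iff₀ hA0 (hZpos (m+2))]
    have heven : Even (m+2) := by
      rcases hodd with ⟨t, ht⟩
      exact ⟨t, by omega⟩
    have hBpow : 0 < B^(m+2) := heven.pow_pos hBne
    have hkey : 0 < w * (((q:ℝ)-1) * B^(m+2)) * (A - B) :=
      mul_pos (mul_pos hw0 (mul_pos (by linarith) hBpow)) (by rw [hABq]; linarith)
    rw [pow_succ B (m+2), pow_succ A (m+2)]
    nlinarith [hkey]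
  · intro n hn heven
    obtain ⟨m, rfl⟩ : ∃ m, n = m + 3 := ⟨n - 3, by omega⟩
    rw [hU m, div_lt_div_iff₀ (hZpos (m+2)) hA0]
    have hodd : Odd (m+2) := by
      rcases heven with ⟨t, ht⟩
      exact ⟨t-1, by omega⟩
    have hBpow : B^(m+2) < 0 := hodd.pow_neg hB0
    have hkey : w * (((q:ℝ)-1) * B^(m+2)) * (A - B) < 0 := by
      apply mul_neg_of_neg_of_pos
      · apply mul_neg_of_pos_of_neg hw0
        exact mul_neg_of_pos_of_neg (by linarith) hBpow
      · rw [hABq]; linarith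
    rw [pow_succ B (m+2), pow_succ A (m+2)]
    nlinarith [hkey]
  · have hr : |B / A| < 1 := by
      rw [abs_div, abs_of_pos hA0, div_lt_one hA0]
      linarith
    have h0 := tendsto_pow_atTop_nhds_zero_of_abs_lt_one hr
    have h1 : Filter.Tendsto (fun n : ℕ => (B/A)^(n-1)) Filter.atTop (nhds 0) :=
      h0.comp (Filter.tendsto_sub_atTop_nat 1)
    have hnum : Filter.Tendsto (fun n : ℕ => 1 + ((q:ℝ)-1) * (B/A)^(n-1)) Filter.atTop
        (nhds (1 + ((q:ℝ)-1) * 0)) := Filter.Tendsto.add tendsto_const_nhds (h1.const_mul _)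
    have hden : Filter.Tendsto (fun n : ℕ => 1 + ((q:ℝ)-1) * (B/A)^n) Filter.atTop
        (nhds (1 + ((q:ℝ)-1) * 0)) := Filter.Tendsto.add tendsto_const_nhds (h0.const_mul _)
    have hratio : Filter.Tendsto
        (fun n : ℕ => w / A * ((1 + ((q:ℝ)-1)*(B/A)^(n-1)) / (1 + ((q:ℝ)-1)*(B/A)^n)))
        Filter.atTop (nhds (w / A * ((1 + ((q:ℝ)-1)*0) / (1 + ((q:ℝ)-1)*0)))) :=
      Filter.Tendsto.mul tendsto_const_nhds (hnum.div hden (by norm_num))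
    have hval : w / A * ((1 + ((q:ℝ)-1)*0) / (1 + ((q:ℝ)-1)*0)) = w / A := by norm_num
    rw [hval] at hratio
    apply Filter.Tendsto.congr' _ hratio
    filter_upwards [Filter.eventually_ge_atTop 3] with n hn
    obtain ⟨m, rfl⟩ : ∃ m, n = m + 3 := ⟨n - 3, by omega⟩
    rw [hU m]
    have hsub : m + 3 - 1 = m + 2 := rfl
    rw [hsub]
    have hAne : A ≠ 0 := ne_of_gt hA0
    have hzne : A^(m+3) + ((q:ℝ)-1)*B^(m+3) ≠ 0 := ne_of_gt (hZpos (m+2))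
    have expand : ∀ k : ℕ, 1 + ((q:ℝ)-1)*(B/A)^k = (A^k + ((q:ℝ)-1)*B^k)/A^k := by
      intro k
      rw [div_pow]
      field_simp
    rw [expand (m+2), expand (m+3)]
    rw [div_div_div_eq]
    rw [div_mul_div_comm]
    have hz2 : A^(m+2) + ((q:ℝ)-1)*B^(m+2) ≠ 0 := ne_of_gt (hZpos (m+1))
    field_simp
    ring
end
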